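/- Let q : [0,1] → ℝ be nonnegative, differentiable and single-barrier with transition point x₀ ∈ [0,1] (i.e. q is monotone increasing on [0,x₀] and monotone decreasing on [x₀,1]), and suppose |q'(x)| ≤ (2/15)·min{q(0), q(1)} for all x ∈ [0,1], and additionally q(x₀) ≤ π²/11. Let 1 ≤ m < n be integers and let z_m, z_n > 0 with z_n > z_m satisfy φ_q(1, z_m) = mπ and φ_q(1, z_n) = nπ. Then z_n²/z_m² ≤ n²/m². -/

import Mathlib

open Real Set intervalIntegral MeasureTheory

set_option maxHeartbeats 2000000 in
lemma aux_key (q q' : ℝ → ℝ) (x₀ : ℝ) (hx₀ : x₀ ∈ Icc (0:ℝ) 1)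
    (hqnonneg : ∀ x ∈ Icc (0:ℝ) 1, 0 ≤ q x)
    (hqdiff : ∀ x ∈ Icc (0:ℝ) 1, HasDerivAt q (q' x) x)
    (hmono : MonotoneOn q (Icc 0 x₀))
    (hanti : AntitoneOn q (Icc x₀ 1))
    (hq'bound : ∀ x ∈ Icc (0:ℝ) 1, |q' x| ≤ (2/15) * min (q 0) (q 1))
    (hsmall : q x₀ ≤ π ^ 2 / 11)
    (k : ℕ) (hk : 1 ≤ k) (z : ℝ) (hz : 0 < z) (φ : ℝ → ℝ)
    (hφ0 : φ 0 = 0)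
    (hODE : ∀ x ∈ Icc (0:ℝ) 1, HasDerivAt φ (z - q x / z * Real.sin (φ x) ^ 2) x)
    (hφ1 : φ 1 = k * π) :
    z ^ 2 = k * π * z + (∫ x in (0:ℝ)..1, q x * Real.sin (φ x) ^ 2)
    ∧ k * π ≤ z ∧ z ≤ k * π + π / 11
    ∧ |(∫ x in (0:ℝ)..1, q x * Real.sin (φ x) ^ 2) - (∫ x in (0:ℝ)..1, q x) / 2|
        ≤ (∫ x in (0:ℝ)..1, q x) / (4 * z) := by
  have h01 : (0:ℝ) ≤ 1 := zero_le_one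
  have huIcc : uIcc (0:ℝ) 1 = Icc 0 1 := uIcc_of_le h01
  have hπ : (3:ℝ) < π := Real.pi_gt_three
  have hπ2 : π < 3.15 := Real.pi_lt_d2
  have hqc : ContinuousOn q (Icc 0 1) := fun x hx => ((hqdiff x hx).continuousAt).continuousWithinAt
  have hφc : ContinuousOn φ (Icc 0 1) := fun x hx => ((hODE x hx).continuousAt).continuousWithinAt
  set w : ℝ → ℝ := fun x => z - q x / z * Real.sin (φ x) ^ 2 with hw_def
  have hODE' : ∀ x ∈ Icc (0:ℝ) 1, HasDerivAt φ (w x) x := hODE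
  have hwc : ContinuousOn w (Icc 0 1) :=
    continuousOn_const.sub ((hqc.div_const z).mul
      ((Real.continuous_sin.comp_continuousOn hφc).pow 2))
  -- pointwise bounds on q
  have hqle : ∀ x ∈ Icc (0:ℝ) 1, q x ≤ q x₀ := by
    intro x hx
    rcases le_total x x₀ with h | h
    · exact hmono ⟨hx.1, h⟩ ⟨hx₀.1, le_refl _⟩ h
    · exact hanti ⟨le_refl _, hx₀.2⟩ ⟨h, hx.2⟩ h
  have hq1 : ∀ x ∈ Icc (0:ℝ) 1, q x ≤ 1 := by
    intro x hx
    have := hqle x hx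
    nlinarith
  have hminq : ∀ x ∈ Icc (0:ℝ) 1, min (q 0) (q 1) ≤ q x := by
    intro x hx
    rcases le_total x x₀ with h | h
    · exact le_trans (min_le_left _ _) (hmono ⟨le_refl _, hx₀.1⟩ ⟨hx.1, h⟩ hx.1)
    · exact le_trans (min_le_right _ _) (hanti ⟨h, hx.2⟩ ⟨hx₀.2, le_refl _⟩ hx.2)
  have hq'le : ∀ x ∈ Icc (0:ℝ) 1, |q' x| ≤ (2/15) * q x := by
    intro x hx
    refine le_trans (hq'bound x hx) ?_
    have := hminq x hx
    nlinarith
  -- FTC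
  set S := ∫ x in (0:ℝ)..1, q x * Real.sin (φ x) ^ 2 with hS_def
  set Q := ∫ x in (0:ℝ)..1, q x with hQ_def
  have hqint : IntervalIntegrable q volume 0 1 := hqc.intervalIntegrable_of_Icc h01
  have hqs2c : ContinuousOn (fun x => q x * Real.sin (φ x) ^ 2) (Icc 0 1) :=
    hqc.mul ((Real.continuous_sin.comp_continuousOn hφc).pow 2)
  have hqs2int : IntervalIntegrable (fun x => q x * Real.sin (φ x) ^ 2) volume 0 1 :=
    hqs2c.intervalIntegrable_of_Icc h01
  have hFTC : (∫ x in (0:ℝ)..1, w x) = k * π := by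
    rw [integral_eq_sub_of_hasDerivAt (fun x hx => hODE' x (huIcc ▸ hx))
      (hwc.intervalIntegrable_of_Icc h01), hφ1, hφ0, sub_zero]
  have hwint : (∫ x in (0:ℝ)..1, w x) = z - S / z := by
    have heq : EqOn w (fun x => z - q x * Real.sin (φ x) ^ 2 / z) (uIcc (0:ℝ) 1) := by
      intro x _; simp only [hw_def]; ring
    rw [integral_congr heq, integral_sub intervalIntegrable_const
      (hqs2int.div_const z), intervalIntegral.integral_div, intervalIntegral.integral_const]
    simp [hS_def]
  have hid : k * π = z - S / z := by rw [← hFTC, hwint]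
  have hS0 : 0 ≤ S := by
    rw [hS_def]
    apply intervalIntegral.integral_nonneg h01
    intro x hx
    exact mul_nonneg (hqnonneg x hx) (sq_nonneg _)
  have hSub : S ≤ π ^ 2 / 11 := by
    rw [hS_def]
    have : (∫ x in (0:ℝ)..1, q x * Real.sin (φ x) ^ 2) ≤ ∫ _x in (0:ℝ)..1, π ^ 2 / 11 := by
      apply integral_mono_on h01 hqs2int intervalIntegrable_const
      intro x hx
      have h1 := hqle x hx
      have h2 := hqnonneg x hx
      nlinarith [sin_sq_le_one (φ x), sq_nonneg (Real.sin (φ x))]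
    simpa using this
  have hzk : k * π ≤ z := by
    have hSz : 0 ≤ S / z := div_nonneg hS0 hz.le
    linarith [hid]
  have hkR : (1:ℝ) ≤ (k:ℝ) := by exact_mod_cast hk
  have hzπ : π ≤ z := le_trans (by nlinarith) hzk
  have hzub : z ≤ k * π + π / 11 := by
    have h1 : S / z ≤ π / 11 := by
      rw [div_le_iff₀ hz]
      nlinarith
    linarith [hid]
  have hidz : z ^ 2 = k * π * z + S := by
    field_simp at hid
    nlinarith [hid]
  refine ⟨hidz, hzk, hzub, ?_⟩
  have hz3 : (3:ℝ) ≤ z := le_trans hπ.le hzπ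
  -- definitions for integration by parts
  set v : ℝ → ℝ := fun x => Real.sin (φ x) * Real.cos (φ x) with hv_def
  set dv : ℝ → ℝ := fun x => (Real.cos (φ x) ^ 2 - Real.sin (φ x) ^ 2) * w x with hdv_def
  set dw : ℝ → ℝ := fun x =>
    -(q' x / z * Real.sin (φ x) ^ 2 + q x / z * (2 * Real.sin (φ x) * (Real.cos (φ x) * w x)))
    with hdw_def
  set u : ℝ → ℝ := fun x => q x / w x with hu_def
  set du : ℝ → ℝ := fun x => (q' x * w x - q x * dw x) / w x ^ 2 with hdu_def
  -- bounds on w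
  have hwlb : ∀ x ∈ Icc (0:ℝ) 1, 10/11 * z ≤ w x := by
    intro x hx
    have h1 := hqnonneg x hx
    have h2 := hqle x hx
    have h3 : Real.sin (φ x) ^ 2 ≤ 1 := sin_sq_le_one _
    have h4 : 0 ≤ Real.sin (φ x) ^ 2 := sq_nonneg _
    have h5 : q x / z * Real.sin (φ x) ^ 2 = (q x * Real.sin (φ x) ^ 2) / z := by ring
    have h6 : (q x * Real.sin (φ x) ^ 2) / z ≤ z / 11 := by
      rw [div_le_div_iff₀ hz (by norm_num : (0:ℝ) < 11)]
      nlinarith [mul_nonneg h1 (by linarith : (0:ℝ) ≤ 1 - Real.sin (φ x) ^ 2),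
        mul_self_le_mul_self Real.pi_pos.le hzπ]
    simp only [hw_def]
    rw [h5]
    linarith
  have hwub : ∀ x ∈ Icc (0:ℝ) 1, w x ≤ z := by
    intro x hx
    have h1 := hqnonneg x hx
    have h4 : 0 ≤ Real.sin (φ x) ^ 2 := sq_nonneg _
    simp only [hw_def]
    have : 0 ≤ q x / z * Real.sin (φ x) ^ 2 := mul_nonneg (div_nonneg h1 hz.le) h4
    linarith
  have hwpos : ∀ x ∈ Icc (0:ℝ) 1, 0 < w x := by
    intro x hx
    exact lt_of_lt_of_le (by positivity) (hwlb x hx)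
  -- derivatives
  have hdwd : ∀ x ∈ Icc (0:ℝ) 1, HasDerivAt w (dw x) x := by
    intro x hx
    have h2 : HasDerivAt (fun y => Real.sin (φ y) ^ 2)
        (2 * Real.sin (φ x) * (Real.cos (φ x) * w x)) x := by
      have h := ((hODE' x hx).sin).pow 2
      refine h.congr_deriv ?_
      norm_num
    have h3 := ((hqdiff x hx).div_const z).mul h2
    have h4 := (hasDerivAt_const x z).sub h3
    refine h4.congr_deriv ?_
    simp only [hdw_def]
    ring
  have hud : ∀ x ∈ Icc (0:ℝ) 1, HasDerivAt u (du x) x := fun x hx =>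
    (hqdiff x hx).div (hdwd x hx) (ne_of_gt (hwpos x hx))
  have hvd : ∀ x ∈ Icc (0:ℝ) 1, HasDerivAt v (dv x) x := by
    intro x hx
    have h := ((hODE' x hx).sin).mul ((hODE' x hx).cos)
    refine h.congr_deriv ?_
    simp only [hdv_def]
    ring
  -- the key pointwise estimate |du| ≤ q/z
  have hdule : ∀ x ∈ Icc (0:ℝ) 1, |du x| ≤ q x / z := by
    intro x hx
    have hq0 := hqnonneg x hx
    have hqx1 := hq1 x hx
    have hq' := hq'le x hx
    have hwl := hwlb x hx
    have hwu := hwub x hx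
    have hwp := hwpos x hx
    have hs1 : Real.sin (φ x) ^ 2 ≤ 1 := sin_sq_le_one _
    have hsc : |2 * Real.sin (φ x) * Real.cos (φ x)| ≤ 1 := by
      rw [show 2 * Real.sin (φ x) * Real.cos (φ x) = Real.sin (2 * φ x) by
        rw [Real.sin_two_mul]]
      exact Real.abs_sin_le_one _
    have hdwb : |dw x| ≤ 47/45 * q x := by
      have e1 : |dw x| ≤ |q' x / z * Real.sin (φ x) ^ 2|
          + |q x / z * (2 * Real.sin (φ x) * (Real.cos (φ x) * w x))| := by
        simp only [hdw_def]
        rw [abs_neg]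
        exact abs_add_le _ _
      have e2 : |q' x / z * Real.sin (φ x) ^ 2| ≤ 2/45 * q x := by
        rw [abs_mul, abs_div, abs_of_pos hz, abs_of_nonneg (sq_nonneg (Real.sin (φ x)))]
        have hA : |q' x| / z ≤ 2/45 * q x := by
          rw [div_le_iff₀ hz]
          nlinarith [abs_nonneg (q' x)]
        nlinarith [div_nonneg (abs_nonneg (q' x)) hz.le,
          mul_nonneg (div_nonneg (abs_nonneg (q' x)) hz.le) (sq_nonneg (Real.sin (φ x)))]
      have e3 : |q x / z * (2 * Real.sin (φ x) * (Real.cos (φ x) * w x))| ≤ q x := by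
        have hB0 : 0 ≤ q x * w x / z := by positivity
        have hB1 : q x * w x / z ≤ q x := by
          rw [div_le_iff₀ hz]
          nlinarith
        have e4 : q x / z * (2 * Real.sin (φ x) * (Real.cos (φ x) * w x))
            = (q x * w x / z) * (2 * Real.sin (φ x) * Real.cos (φ x)) := by ring
        rw [e4, abs_mul, abs_of_nonneg hB0]
        calc (q x * w x / z) * |2 * Real.sin (φ x) * Real.cos (φ x)|
            ≤ (q x * w x / z) * 1 := mul_le_mul_of_nonneg_left hsc hB0
          _ ≤ q x := by linarith
      linarith
    have hnum : |q' x * w x - q x * dw x| ≤ 2/15 * q x * z + 47/45 * (q x * q x) := by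
      have t1 : |q' x * w x - q x * dw x| ≤ |q' x * w x| + |q x * dw x| := by
        calc |q' x * w x - q x * dw x| = |q' x * w x + -(q x * dw x)| := by ring_nf
          _ ≤ |q' x * w x| + |-(q x * dw x)| := abs_add_le _ _
          _ = |q' x * w x| + |q x * dw x| := by rw [abs_neg]
      have t2 : |q' x * w x| ≤ 2/15 * q x * z := by
        rw [abs_mul, abs_of_pos hwp]
        have := mul_le_mul hq' hwu hwp.le (mul_nonneg (by norm_num) hq0)
        linarith
      have t3 : |q x * dw x| ≤ 47/45 * (q x * q x) := by
        rw [abs_mul, abs_of_nonneg hq0]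
        have := mul_le_mul_of_nonneg_left hdwb hq0
        linarith
      linarith
    have hduabs : |du x| = |q' x * w x - q x * dw x| / w x ^ 2 := by
      simp only [hdu_def]
      rw [abs_div, abs_of_pos (by positivity : (0:ℝ) < w x ^ 2)]
    rw [hduabs, div_le_iff₀ (by positivity : (0:ℝ) < w x ^ 2)]
    have hwsq : 100/121 * z^2 ≤ w x ^ 2 := by nlinarith
    have hmid : 2/15 * q x * z + 47/45 * (q x * q x) ≤ 100/121 * (q x * z) := by
      nlinarith [mul_nonneg (by linarith : (0:ℝ) ≤ z - 3) hq0,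
        mul_nonneg (by linarith : (0:ℝ) ≤ 1 - q x) hq0]
    have hfin : q x / z * (100/121 * z^2) = 100/121 * (q x * z) := by
      field_simp
    calc |q' x * w x - q x * dw x| ≤ 100/121 * (q x * z) := le_trans hnum hmid
      _ = q x / z * (100/121 * z^2) := hfin.symm
      _ ≤ q x / z * w x ^ 2 := by
          exact mul_le_mul_of_nonneg_left hwsq (div_nonneg hq0 hz.le)
  -- integrability of du
  have hsub : Ioc (0:ℝ) 1 ⊆ Icc 0 1 := Ioc_subset_Icc_self
  have hduint : IntervalIntegrable du volume 0 1 := by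
    rw [intervalIntegrable_iff, uIoc_of_le h01]
    constructor
    · have hqm : AEMeasurable q (volume.restrict (Ioc (0:ℝ) 1)) :=
        (hqc.mono hsub).aemeasurable measurableSet_Ioc
      have hwm : AEMeasurable w (volume.restrict (Ioc (0:ℝ) 1)) :=
        (hwc.mono hsub).aemeasurable measurableSet_Ioc
      have hsm : AEMeasurable (fun x => Real.sin (φ x)) (volume.restrict (Ioc (0:ℝ) 1)) :=
        ((Real.continuous_sin.comp_continuousOn hφc).mono hsub).aemeasurable measurableSet_Ioc
      have hcm : AEMeasurable (fun x => Real.cos (φ x)) (volume.restrict (Ioc (0:ℝ) 1)) :=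
        ((Real.continuous_cos.comp_continuousOn hφc).mono hsub).aemeasurable measurableSet_Ioc
      have hdm : AEMeasurable (deriv q) (volume.restrict (Ioc (0:ℝ) 1)) :=
        (measurable_deriv q).aemeasurable
      have hF : AEStronglyMeasurable (fun x =>
          (deriv q x * w x - q x *
            (-(deriv q x / z * Real.sin (φ x) ^ 2
              + q x / z * (2 * Real.sin (φ x) * (Real.cos (φ x) * w x))))) / w x ^ 2)
          (volume.restrict (Ioc (0:ℝ) 1)) :=
        (((hdm.mul hwm).sub (hqm.mul
            ((((hdm.div_const z).mul (hsm.pow_const 2)).add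
              ((hqm.div_const z).mul
                ((aemeasurable_const.mul hsm).mul (hcm.mul hwm)))).neg))).div
          (hwm.pow_const 2)).aestronglyMeasurable
      apply hF.congr
      rw [Filter.EventuallyEq, ae_restrict_iff' measurableSet_Ioc]
      apply Filter.Eventually.of_forall
      intro x hx
      have hd : deriv q x = q' x := (hqdiff x (hsub hx)).deriv
      simp only [hdu_def, hdw_def, hd]
    · apply HasFiniteIntegral.restrict_of_bounded (C := 1/3) measure_Ioc_lt_top
      rw [ae_restrict_iff' measurableSet_Ioc]
      apply Filter.Eventually.of_forall
      intro x hx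
      have h1 := hdule x (hsub hx)
      have h2 := hq1 x (hsub hx)
      have h3 := hqnonneg x (hsub hx)
      have h4 : q x / z ≤ 1/3 := by
        rw [div_le_iff₀ hz]
        nlinarith
      rw [Real.norm_eq_abs]
      linarith
  -- integration by parts
  have hvc : ContinuousOn v (Icc 0 1) :=
    (Real.continuous_sin.comp_continuousOn hφc).mul
      (Real.continuous_cos.comp_continuousOn hφc)
  have hdvc : ContinuousOn dv (Icc 0 1) :=
    (((Real.continuous_cos.comp_continuousOn hφc).pow 2).sub
      ((Real.continuous_sin.comp_continuousOn hφc).pow 2)).mul hwc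
  have hibp := integral_mul_deriv_eq_deriv_mul
    (fun x hx => hud x (huIcc ▸ hx)) (fun x hx => hvd x (huIcc ▸ hx))
    hduint (hdvc.intervalIntegrable_of_Icc h01)
  have hv1 : v 1 = 0 := by
    simp only [hv_def]
    rw [hφ1, Real.sin_nat_mul_pi]
    ring
  have hv0 : v 0 = 0 := by simp [hv_def, hφ0]
  have hmain : (∫ x in (0:ℝ)..1, u x * dv x) = Q - 2 * S := by
    have heq : EqOn (fun x => u x * dv x)
        (fun x => q x - 2 * (q x * Real.sin (φ x) ^ 2)) (uIcc (0:ℝ) 1) := by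
      rw [huIcc]
      intro x hx
      have hwne := ne_of_gt (hwpos x hx)
      have hc : Real.cos (φ x) ^ 2 = 1 - Real.sin (φ x) ^ 2 := Real.cos_sq' (φ x)
      simp only [hu_def, hdv_def]
      rw [hc]
      field_simp
      ring
    rw [integral_congr heq, integral_sub hqint (hqs2int.const_mul 2),
      intervalIntegral.integral_const_mul]
  have hQ2S : Q - 2 * S = -(∫ x in (0:ℝ)..1, du x * v x) := by
    rw [← hmain, hibp, hv1, hv0]
    ring
  have habs : |∫ x in (0:ℝ)..1, du x * v x| ≤ Q / (2*z) := by
    have h1 : |∫ x in (0:ℝ)..1, du x * v x| ≤ ∫ x in (0:ℝ)..1, |du x * v x| :=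
      abs_integral_le_integral_abs h01
    have h2 : (∫ x in (0:ℝ)..1, |du x * v x|) ≤ ∫ x in (0:ℝ)..1, q x / (2*z) := by
      apply integral_mono_on h01 ((hduint.mul_continuousOn (huIcc ▸ hvc)).abs)
        (hqint.div_const (2*z))
      intro x hx
      have h3 := hdule x hx
      have hq0x := hqnonneg x hx
      have h4 : |v x| ≤ 1/2 := by
        have h5 : |2 * Real.sin (φ x) * Real.cos (φ x)| ≤ 1 := by
          rw [show 2 * Real.sin (φ x) * Real.cos (φ x) = Real.sin (2 * φ x) by
            rw [Real.sin_two_mul]]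
          exact Real.abs_sin_le_one _
        have h6 : |2 * Real.sin (φ x) * Real.cos (φ x)| = 2 * |v x| := by
          simp only [hv_def]
          rw [show 2 * Real.sin (φ x) * Real.cos (φ x)
            = 2 * (Real.sin (φ x) * Real.cos (φ x)) by ring, abs_mul]
          norm_num
        linarith [abs_nonneg (v x)]
      calc |du x * v x| = |du x| * |v x| := abs_mul _ _
        _ ≤ (q x / z) * (1/2) :=
            mul_le_mul h3 h4 (abs_nonneg _) (div_nonneg hq0x hz.le)
        _ = q x / (2*z) := by ring
    have h5 : (∫ x in (0:ℝ)..1, q x / (2*z)) = Q / (2*z) :=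
      intervalIntegral.integral_div _ _
    linarith
  have hfinal : |Q - 2*S| ≤ Q/(2*z) := by
    rw [hQ2S, abs_neg]
    exact habs
  have heq2 : |S - Q/2| = |Q - 2*S| / 2 := by
    rw [show S - Q/2 = -((Q - 2*S)/2) by ring, abs_neg, abs_div]
    norm_num
  rw [heq2]
  have h7 : Q / (2*z) = 2 * (Q/(4*z)) := by ring
  linarith

set_option maxHeartbeats 1000000 in
/-- Upper bound λₙ/λₘ ≤ n²/m² for all 1 ≤ m < n, for nonnegative single-barrier
potentials with q(x₀) ≤ π²/11. -/
theorem ratio_bound_single_barrier_all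
    (q q' : ℝ → ℝ) (x₀ : ℝ) (hx₀ : x₀ ∈ Icc (0:ℝ) 1)
    (hqnonneg : ∀ x ∈ Icc (0:ℝ) 1, 0 ≤ q x)
    (hqdiff : ∀ x ∈ Icc (0:ℝ) 1, HasDerivAt q (q' x) x)
    (hmono : MonotoneOn q (Icc 0 x₀))
    (hanti : AntitoneOn q (Icc x₀ 1))
    (hq'bound : ∀ x ∈ Icc (0:ℝ) 1, |q' x| ≤ (2/15) * min (q 0) (q 1))
    (hsmall : q x₀ ≤ π ^ 2 / 11)
    (m n : ℕ) (hm : 1 ≤ m) (hmn : m < n)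
    (zm zn : ℝ) (hzm : 0 < zm) (hzn : 0 < zn)
    (φm φn : ℝ → ℝ)
    (hφm0 : φm 0 = 0)
    (hφmODE : ∀ x ∈ Icc (0:ℝ) 1,
      HasDerivAt φm (zm - q x / zm * Real.sin (φm x) ^ 2) x)
    (hφm1 : φm 1 = m * π)
    (hφn0 : φn 0 = 0)
    (hφnODE : ∀ x ∈ Icc (0:ℝ) 1,
      HasDerivAt φn (zn - q x / zn * Real.sin (φn x) ^ 2) x)
    (hφn1 : φn 1 = n * π)
    (hgt : zm < zn) :
    zn ^ 2 / zm ^ 2 ≤ (n : ℝ) ^ 2 / (m : ℝ) ^ 2 := by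
  obtain ⟨hidm, hzmk, hzmub, hSm⟩ := aux_key q q' x₀ hx₀ hqnonneg hqdiff hmono hanti
    hq'bound hsmall m hm zm hzm φm hφm0 hφmODE hφm1
  obtain ⟨hidn, hznk, hznub, hSn⟩ := aux_key q q' x₀ hx₀ hqnonneg hqdiff hmono hanti
    hq'bound hsmall n (le_trans hm hmn.le) zn hzn φn hφn0 hφnODE hφn1
  set Sm := ∫ x in (0:ℝ)..1, q x * Real.sin (φm x) ^ 2 with hSm_def
  set Sn := ∫ x in (0:ℝ)..1, q x * Real.sin (φn x) ^ 2 with hSn_def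
  set Q := ∫ x in (0:ℝ)..1, q x with hQ_def
  have hπ : (3:ℝ) < π := Real.pi_gt_three
  have hQ0 : 0 ≤ Q := intervalIntegral.integral_nonneg zero_le_one hqnonneg
  have hmR : (1:ℝ) ≤ (m:ℝ) := by exact_mod_cast hm
  have hnm : (m:ℝ) + 1 ≤ (n:ℝ) := by exact_mod_cast hmn
  have hzm3 : (3:ℝ) ≤ zm := le_trans (by nlinarith [Real.pi_pos]) hzmk
  have hd : zm + 2 ≤ zn := by
    nlinarith [Real.pi_pos, mul_nonneg (by linarith : (0:ℝ) ≤ (n:ℝ) - ((m:ℝ)+1)) Real.pi_pos.le]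
  have hSm' : Q/2 - Q/(4*zm) ≤ Sm := by
    have h := (abs_le.1 hSm).1
    linarith
  have hSn' : Sn ≤ Q/2 + Q/(4*zn) := by
    have h := (abs_le.1 hSn).2
    linarith
  have hX1 : 0 ≤ 2*zm*(zn-zm) - zm - (zn-zm) := by
    nlinarith [mul_nonneg (by linarith : (0:ℝ) ≤ zm - 3)
      (by linarith : (0:ℝ) ≤ 2*(zn-zm) - 1)]
  have hX : 0 ≤ 2*zm*zn*(zn-zm) - (zn^2 - zm*zn + zm^2) := by
    nlinarith [mul_nonneg hzn.le hX1,
      mul_nonneg hzm.le (by linarith : (0:ℝ) ≤ zn - zm)]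
  have hbr : 0 ≤ 2*zm*zn*(zn^2 - zm^2) - (zn^3 + zm^3) := by
    nlinarith [mul_nonneg (by linarith : (0:ℝ) ≤ zm + zn) hX]
  have hkey : Sn * zm^2 ≤ Sm * zn^2 := by
    have h2 : (Q/2 + Q/(4*zn)) * zm^2 ≤ (Q/2 - Q/(4*zm)) * zn^2 := by
      rw [← sub_nonneg]
      have e : (Q/2 - Q/(4*zm)) * zn^2 - (Q/2 + Q/(4*zn)) * zm^2
          = Q * ((2*zm*zn*(zn^2 - zm^2) - (zn^3 + zm^3))/(4*zm*zn)) := by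
        field_simp
        ring
      rw [e]
      exact mul_nonneg hQ0 (div_nonneg hbr (by positivity))
    calc Sn * zm^2 ≤ (Q/2 + Q/(4*zn)) * zm^2 :=
          mul_le_mul_of_nonneg_right hSn' (sq_nonneg zm)
      _ ≤ (Q/2 - Q/(4*zm)) * zn^2 := h2
      _ ≤ Sm * zn^2 := mul_le_mul_of_nonneg_right hSm' (sq_nonneg zn)
  have hmzn : (m:ℝ) * zn ≤ (n:ℝ) * zm := by
    have em : Sm = zm^2 - m*π*zm := by linarith
    have en : Sn = zn^2 - n*π*zn := by linarith
    have e : Sm * zn^2 - Sn * zm^2 = π * (zm*zn) * ((n:ℝ)*zm - (m:ℝ)*zn) := by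
      rw [em, en]
      ring
    have hpos : 0 ≤ π * (zm*zn) * ((n:ℝ)*zm - (m:ℝ)*zn) := by
      rw [← e]
      linarith
    have h3 : 0 < π * (zm*zn) := by positivity
    by_contra hcon
    push_neg at hcon
    have h4 : π * (zm*zn) * ((n:ℝ)*zm - (m:ℝ)*zn) < 0 :=
      mul_neg_of_pos_of_neg h3 (by linarith)
    linarith
  rw [div_le_div_iff₀ (by positivity) (by positivity : (0:ℝ) < (m:ℝ)^2)]
  have h5 : ((m:ℝ) * zn) * ((m:ℝ) * zn) ≤ ((n:ℝ) * zm) * ((n:ℝ) * zm) :=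
    mul_self_le_mul_self (by positivity) hmzn
  nlinarith [h5]
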